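/- (Böhning's bound) For any probability vector p ∈ Δ^{K−1} (p_k ≥ 0, Σ_k p_k = 1), the matrix V(p) = Diag(p) − p pᵀ satisfies V(p) ⪯ (1/2)[I_K − (1/K) 1 1ᵀ] in the Loewner order. -/

import Mathlib

open Matrix

/-- Key scalar lemma: variance bound `Var_p(x) ≤ (1/2) ∑ x_i²`. -/
lemma var_le_half {K : ℕ} (p x : Fin K → ℝ) (hp : ∀ i, 0 ≤ p i)
    (hsum : ∑ i, p i = 1) :
    ∑ i, p i * x i ^ 2 - (∑ i, p i * x i) ^ 2 ≤ (1 / 2) * ∑ i, x i ^ 2 := by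
  have hK : 0 < K := by
    by_contra h
    push_neg at h
    interval_cases K
    simp at hsum
  have hne : (Finset.univ : Finset (Fin K)).Nonempty := by
    simpa [Finset.univ_nonempty_iff] using Fin.pos_iff_nonempty.mp hK
  obtain ⟨i0, -, hi0⟩ := Finset.exists_max_image Finset.univ x hne
  obtain ⟨j0, -, hj0⟩ := Finset.exists_min_image Finset.univ x hne
  set M := x i0
  set m := x j0
  set c := (M + m) / 2
  have h1 : ∑ i, p i * x i ^ 2 - (∑ i, p i * x i) ^ 2 ≤ ∑ i, p i * (x i - c) ^ 2 := by
    have he : ∑ i, p i * (x i - c) ^ 2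
        = ∑ i, (p i * x i ^ 2 - 2 * c * (p i * x i) + c ^ 2 * p i) :=
      Finset.sum_congr rfl fun i _ => by ring
    rw [he, Finset.sum_add_distrib, Finset.sum_sub_distrib, ← Finset.mul_sum,
      ← Finset.mul_sum, hsum, mul_one]
    nlinarith [sq_nonneg ((∑ i, p i * x i) - c)]
  have h2 : ∑ i, p i * (x i - c) ^ 2 ≤ ((M - m) / 2) ^ 2 := by
    calc ∑ i, p i * (x i - c) ^ 2 ≤ ∑ i, p i * ((M - m) / 2) ^ 2 := by
          apply Finset.sum_le_sum
          intro i _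
          have hM : x i ≤ M := hi0 i (Finset.mem_univ i)
          have hm : m ≤ x i := hj0 i (Finset.mem_univ i)
          have : (x i - c) ^ 2 ≤ ((M - m) / 2) ^ 2 := by
            apply sq_le_sq'
            · simp only [c]; linarith
            · simp only [c]; linarith
          exact mul_le_mul_of_nonneg_left this (hp i)
      _ = ((M - m) / 2) ^ 2 := by rw [← Finset.sum_mul, hsum, one_mul]
  by_cases hij : i0 = j0
  · have hMm : M = m := by simp [M, m, hij]
    have h0 : ((M - m) / 2) ^ 2 = 0 := by rw [hMm]; ring
    have hx : (0:ℝ) ≤ ∑ i, x i ^ 2 := Finset.sum_nonneg fun i _ => sq_nonneg _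
    linarith
  · have hsub : ({i0, j0} : Finset (Fin K)) ⊆ Finset.univ := Finset.subset_univ _
    have hpair : x i0 ^ 2 + x j0 ^ 2 ≤ ∑ i, x i ^ 2 := by
      have := Finset.sum_le_sum_of_subset_of_nonneg hsub
        (fun i _ _ => sq_nonneg (x i))
      rwa [Finset.sum_pair hij] at this
    nlinarith [sq_nonneg (M + m)]

/-- Böhning's bound: for a probability vector p,
Diag(p) − p pᵀ ⪯ (1/2)[I − (1/K) 1 1ᵀ] in the Loewner order. -/
theorem bohning_bound
    {K : ℕ} (p : Fin K → ℝ) (hp : ∀ i, 0 ≤ p i) (hsum : ∑ i, p i = 1) :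
    ((1 / 2 : ℝ) • ((1 : Matrix (Fin K) (Fin K) ℝ)
        - (1 / (K : ℝ)) • Matrix.vecMulVec (fun _ => (1 : ℝ)) (fun _ => (1 : ℝ)))
      - (Matrix.diagonal p - Matrix.vecMulVec p p)).PosSemidef := by
  have hK : 0 < K := by
    by_contra h
    push_neg at h
    interval_cases K
    simp at hsum
  have hKR : (0:ℝ) < (K:ℝ) := by exact_mod_cast hK
  rw [Matrix.posSemidef_iff_dotProduct_mulVec]
  constructor
  · -- Hermitian
    ext i j
    simp only [Matrix.conjTranspose_apply, star_trivial, Matrix.sub_apply,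
      Matrix.smul_apply, Matrix.one_apply, Matrix.diagonal_apply,
      Matrix.vecMulVec_apply, smul_eq_mul]
    by_cases h : i = j
    · subst h; ring
    · have h' : ¬ j = i := fun hh => h hh.symm
      simp only [if_neg h, if_neg h']
      ring
  · intro x
    have hsx : star x = x := by
      funext i
      simp
    have hform : x ⬝ᵥ (((1 / 2 : ℝ) • ((1 : Matrix (Fin K) (Fin K) ℝ)
        - (1 / (K : ℝ)) • Matrix.vecMulVec (fun _ => (1 : ℝ)) (fun _ => (1 : ℝ)))
      - (Matrix.diagonal p - Matrix.vecMulVec p p)) *ᵥ x)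
        = (1/2) * (∑ i, x i ^ 2) - (1/(2*K)) * (∑ i, x i)^2
          - (∑ i, p i * x i ^ 2) + (∑ i, p i * x i)^2 := by
      simp only [Matrix.sub_mulVec, Matrix.smul_mulVec, Matrix.one_mulVec,
        dotProduct_sub, dotProduct_smul]
      have hvmv : ∀ (a b : Fin K → ℝ), x ⬝ᵥ (Matrix.vecMulVec a b *ᵥ x)
          = (∑ i, x i * a i) * (∑ i, b i * x i) := by
        intro a b
        simp only [Matrix.mulVec, dotProduct, Matrix.vecMulVec_apply,
          Finset.mul_sum, Finset.sum_mul, mul_assoc]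
        exact Finset.sum_comm
      have hdiag : x ⬝ᵥ (Matrix.diagonal p *ᵥ x) = ∑ i, p i * x i ^ 2 := by
        simp only [dotProduct, Matrix.mulVec_diagonal]
        exact Finset.sum_congr rfl fun i _ => by ring
      rw [hvmv, hvmv, hdiag]
      simp only [dotProduct, smul_eq_mul, mul_one, one_mul]
      rw [show ∑ i, x i * x i = ∑ i, x i ^ 2 from
          Finset.sum_congr rfl fun i _ => (sq (x i)).symm,
        show ∑ i, x i * p i = ∑ i, p i * x i from
          Finset.sum_congr rfl fun i _ => mul_comm _ _]
      field_simp
      ring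
    rw [hsx, hform]
    set μ := (∑ i, x i) / K with hμ
    have key := var_le_half p (fun i => x i - μ) hp hsum
    have e1 : ∑ i, p i * (x i - μ) ^ 2
        = ∑ i, p i * x i ^ 2 - 2 * μ * ∑ i, p i * x i + μ ^ 2 := by
      have he : ∑ i, p i * (x i - μ) ^ 2
          = ∑ i, (p i * x i ^ 2 - 2 * μ * (p i * x i) + μ ^ 2 * p i) :=
        Finset.sum_congr rfl fun i _ => by ring
      rw [he, Finset.sum_add_distrib, Finset.sum_sub_distrib, ← Finset.mul_sum,
        ← Finset.mul_sum, hsum, mul_one]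
    have e2 : ∑ i, p i * (x i - μ) = ∑ i, p i * x i - μ := by
      have he : ∑ i, p i * (x i - μ) = ∑ i, (p i * x i - μ * p i) :=
        Finset.sum_congr rfl fun i _ => by ring
      rw [he, Finset.sum_sub_distrib, ← Finset.mul_sum, hsum, mul_one]
    have e3 : ∑ i, (x i - μ) ^ 2 = ∑ i, x i ^ 2 - (∑ i, x i)^2 / K := by
      have he : ∑ i, (x i - μ) ^ 2 = ∑ i, (x i ^ 2 - 2 * μ * x i + μ ^ 2) :=
        Finset.sum_congr rfl fun i _ => by ring
      rw [he, Finset.sum_add_distrib, Finset.sum_sub_distrib, ← Finset.mul_sum,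
        Finset.sum_const, Finset.card_univ, Fintype.card_fin, hμ]
      field_simp
      have hKK : (K:ℝ)^2 * (K:ℝ)⁻¹^2 = 1 := by rw [← mul_pow, mul_inv_cancel₀ hKR.ne', one_pow]
      linear_combination (∑ i, x i)^2 * hKK
    rw [e1, e2, e3] at key
    have hK2 : (K:ℝ) ≠ 0 := ne_of_gt hKR
    have hsq : ((∑ i, p i * x i) - μ)^2
        = (∑ i, p i * x i)^2 - 2*(∑ i, p i * x i)*μ + μ^2 := by ring
    have key2 : (∑ i, p i * x i ^ 2) - (∑ i, p i * x i)^2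
        ≤ 1/2 * (∑ i, x i ^ 2 - (∑ i, x i)^2 / K) := by linarith
    have hrw : (1:ℝ)/2 * (∑ i, x i ^ 2 - (∑ i, x i)^2 / K)
        = 1/2 * (∑ i, x i ^ 2) - 1/(2*K) * (∑ i, x i)^2 := by
      field_simp
    linarith
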